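/- arXiv:1402.2049 — 2 statements merged into one kernel-verified Lean document; each statement's English description precedes it below -/
import Mathlib

section
/- Let Λ be a lattice of signature (1, n−1), C⁺ a connected component of the positive cone, and P a 2-plane in Λ_ℝ defined over ℚ which contains a nonzero rational isotropic vector. Then for any positive integer N, the set {v ∈ Λ : (v,v) > −N and v^⊥ ∩ P ∩ C⁺ ≠ ∅} is finite. -/
open Submodule

lemma pairInt {n : ℕ} (B : EuclideanSpace ℝ (Fin n) →ₗ[ℝ] EuclideanSpace ℝ (Fin n) →ₗ[ℝ] ℝ)
    (b : Module.Basis (Fin n) ℝ (EuclideanSpace ℝ (Fin n)))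
    (hint : ∀ i j, ∃ m : ℤ, B (b i) (b j) = (m : ℝ))
    {u v : EuclideanSpace ℝ (Fin n)}
    (hu : u ∈ Submodule.span ℤ (Set.range b)) (hv : v ∈ Submodule.span ℤ (Set.range b)) :
    ∃ m : ℤ, B u v = (m : ℝ) := by
  induction hu, hv using Submodule.span_induction₂ with
  | mem_mem x y hx hy =>
      obtain ⟨i, rfl⟩ := hx; obtain ⟨j, rfl⟩ := hy; exact hint i j
  | zero_left y hy => exact ⟨0, by simp⟩
  | zero_right x hx => exact ⟨0, by simp⟩
  | add_left x y z hx hy hz h1 h2 =>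
      obtain ⟨m1, e1⟩ := h1; obtain ⟨m2, e2⟩ := h2
      exact ⟨m1 + m2, by simp [e1, e2]⟩
  | add_right x y z hx hy hz h1 h2 =>
      obtain ⟨m1, e1⟩ := h1; obtain ⟨m2, e2⟩ := h2
      exact ⟨m1 + m2, by simp [e1, e2]⟩
  | smul_left r x y hx hy h1 =>
      obtain ⟨m, e⟩ := h1
      refine ⟨r * m, ?_⟩
      rw [map_zsmul]
      simp [e]
  | smul_right r x y hx hy h1 =>
      obtain ⟨m, e⟩ := h1
      refine ⟨r * m, ?_⟩
      rw [map_zsmul]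
      simp [e]

lemma ratScale {n : ℕ} (b : Module.Basis (Fin n) ℝ (EuclideanSpace ℝ (Fin n)))
    {u : EuclideanSpace ℝ (Fin n)} (c : Fin n → ℚ) (hc : u = ∑ j, (c j : ℝ) • b j) :
    ∃ k : ℕ, 0 < k ∧ (k : ℝ) • u ∈ Submodule.span ℤ (Set.range b) := by
  refine ⟨∏ j, (c j).den, Finset.prod_pos fun j _ => (c j).pos, ?_⟩
  have key : ∀ j : Fin n, ∃ z : ℤ, ((∏ i, (c i).den : ℕ) : ℝ) * (c j : ℝ) = (z : ℝ) := by
    intro j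
    obtain ⟨m, hm⟩ : ((c j).den : ℕ) ∣ ∏ i, (c i).den := Finset.dvd_prod_of_mem _ (Finset.mem_univ j)
    refine ⟨(c j).num * m, ?_⟩
    have hden : ((c j).den : ℝ) ≠ 0 := Nat.cast_ne_zero.mpr (c j).den_nz
    rw [hm]
    rw [Rat.cast_def]
    push_cast
    field_simp
  rw [hc, Finset.smul_sum]
  refine Submodule.sum_mem _ fun j _ => ?_
  obtain ⟨z, hz⟩ := key j
  rw [smul_smul, hz, Int.cast_smul_eq_zsmul]
  exact Submodule.smul_mem _ z (Submodule.subset_span ⟨j, rfl⟩)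

set_option maxHeartbeats 2000000

/-- Λ a lattice of signature (1,n−1), C⁺ a connected component of the positive
cone, P a rational 2-plane containing a nonzero rational isotropic vector. Then for any
positive integer N the set {v ∈ Λ : (v,v) > −N and v^⊥ ∩ P ∩ C⁺ ≠ ∅} is finite. -/
theorem stmt3 (n : ℕ)
    (B : EuclideanSpace ℝ (Fin n) →ₗ[ℝ] EuclideanSpace ℝ (Fin n) →ₗ[ℝ] ℝ)
    (hsym : ∀ x y, B x y = B y x)
    (hnd : ∀ x, (∀ y, B x y = 0) → x = 0)
    (hsig : ∀ x, 0 < B x x → ∀ y, y ≠ 0 → B x y = 0 → B y y < 0)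
    (b : Module.Basis (Fin n) ℝ (EuclideanSpace ℝ (Fin n)))
    (hint : ∀ i j, ∃ m : ℤ, B (b i) (b j) = (m : ℝ))
    (h : EuclideanSpace ℝ (Fin n))
    (hhL : h ∈ Submodule.span ℤ (Set.range b)) (hh : 0 < B h h)
    -- the rational 2-plane P, spanned by rational vectors p, q
    (p q : EuclideanSpace ℝ (Fin n))
    (hpQ : ∃ c : Fin n → ℚ, p = ∑ j, (c j : ℝ) • b j)
    (hqQ : ∃ c : Fin n → ℚ, q = ∑ j, (c j : ℝ) • b j)
    (hpq : LinearIndependent ℝ ![p, q])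
    -- a nonzero rational isotropic vector of P
    (x : EuclideanSpace ℝ (Fin n))
    (hxP : x ∈ Submodule.span ℝ ({p, q} : Set (EuclideanSpace ℝ (Fin n))))
    (hxQ : ∃ c : Fin n → ℚ, x = ∑ j, (c j : ℝ) • b j)
    (hx0 : x ≠ 0) (hxiso : B x x = 0)
    (N : ℕ) (hN : 0 < N) :
    {v : EuclideanSpace ℝ (Fin n) | v ∈ Submodule.span ℤ (Set.range b) ∧
      -(N : ℝ) < B v v ∧
      ∃ y, y ∈ Submodule.span ℝ ({p, q} : Set (EuclideanSpace ℝ (Fin n))) ∧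
        B v y = 0 ∧ 0 < B y y ∧ 0 < B y h}.Finite := by
  classical
  set S : Set (EuclideanSpace ℝ (Fin n)) := {v | v ∈ Submodule.span ℤ (Set.range b) ∧
      -(N : ℝ) < B v v ∧
      ∃ y, y ∈ Submodule.span ℝ ({p, q} : Set (EuclideanSpace ℝ (Fin n))) ∧
        B v y = 0 ∧ 0 < B y y ∧ 0 < B y h} with hS
  rcases Set.eq_empty_or_nonempty S with hSe | ⟨v₀, hv₀⟩
  · rw [hSe]; exact Set.finite_empty
  obtain ⟨hv₀Λ, hv₀N, y₀', hy₀'P, hvy₀', hy₀'pos, hy₀'h⟩ := hv₀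
  -- pick rational w ∈ {p, q} with B x w ≠ 0
  have hw : ∃ w ∈ ({p, q} : Set (EuclideanSpace ℝ (Fin n))),
      (∃ c : Fin n → ℚ, w = ∑ j, (c j : ℝ) • b j) ∧ B x w ≠ 0 := by
    by_contra hcon
    push_neg at hcon
    have hxp : B x p = 0 := hcon p (Set.mem_insert _ _) hpQ
    have hxq : B x q = 0 := hcon q (Set.mem_insert_of_mem _ rfl) hqQ
    obtain ⟨s, t, hst⟩ := Submodule.mem_span_pair.mp hy₀'P
    have hyx : B y₀' x = 0 := by
      rw [← hst, hsym]
      simp [map_add, map_smul, hxp, hxq]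
    exact absurd (hsig y₀' hy₀'pos x hx0 hyx) (by rw [hxiso]; exact lt_irrefl 0)
  obtain ⟨w, hwmem, hwQ, hxw⟩ := hw
  have hwP : w ∈ Submodule.span ℝ ({p, q} : Set (EuclideanSpace ℝ (Fin n))) :=
    Submodule.subset_span hwmem
  obtain ⟨cx, hcx⟩ := hxQ
  obtain ⟨cw, hcw⟩ := hwQ
  obtain ⟨kx, hkx, hxtΛ⟩ := ratScale b cx hcx
  obtain ⟨kw, hkw, hwtΛ⟩ := ratScale b cw hcw
  set xt : EuclideanSpace ℝ (Fin n) := (kx : ℝ) • x with hxt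
  set wt : EuclideanSpace ℝ (Fin n) := (kw : ℝ) • w with hwt
  have hxtP : xt ∈ Submodule.span ℝ ({p, q} : Set (EuclideanSpace ℝ (Fin n))) :=
    Submodule.smul_mem _ _ hxP
  have hwtP : wt ∈ Submodule.span ℝ ({p, q} : Set (EuclideanSpace ℝ (Fin n))) :=
    Submodule.smul_mem _ _ hwP
  have hxtiso : B xt xt = 0 := by
    simp [hxt, map_smul, smul_eq_mul, hxiso]
  have hxtwt : B xt wt ≠ 0 := by
    simp only [hxt, hwt, map_smul, LinearMap.smul_apply, smul_eq_mul]
    have h1 : (kx : ℝ) ≠ 0 := Nat.cast_ne_zero.mpr hkx.ne'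
    have h2 : (kw : ℝ) ≠ 0 := Nat.cast_ne_zero.mpr hkw.ne'
    exact mul_ne_zero h2 (mul_ne_zero h1 hxw)
  obtain ⟨m1, hm1⟩ := pairInt B b hint hwtΛ hwtΛ
  obtain ⟨m2, hm2⟩ := pairInt B b hint hxtΛ hwtΛ
  have hm2ne : (m2 : ℝ) ≠ 0 := by rw [← hm2]; exact hxtwt
  have hm2z : m2 ≠ 0 := by exact_mod_cast hm2ne
  set x' : EuclideanSpace ℝ (Fin n) := (m1 : ℝ) • xt - (2 * (m2 : ℝ)) • wt with hx'
  have hx'Λ : x' ∈ Submodule.span ℤ (Set.range b) := by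
    refine Submodule.sub_mem _ ?_ ?_
    · rw [Int.cast_smul_eq_zsmul]; exact Submodule.smul_mem _ m1 hxtΛ
    · have : (2 * (m2 : ℝ)) = ((2 * m2 : ℤ) : ℝ) := by push_cast; ring
      rw [this, Int.cast_smul_eq_zsmul]; exact Submodule.smul_mem _ _ hwtΛ
  have hx'P : x' ∈ Submodule.span ℝ ({p, q} : Set (EuclideanSpace ℝ (Fin n))) :=
    Submodule.sub_mem _ (Submodule.smul_mem _ _ hxtP) (Submodule.smul_mem _ _ hwtP)
  have hwtxt : B wt xt = (m2 : ℝ) := by rw [hsym]; exact hm2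
  have hx'iso : B x' x' = 0 := by
    simp only [hx', map_sub, map_smul, LinearMap.sub_apply, LinearMap.smul_apply, smul_eq_mul,
      hxtiso, hm1, hm2, hwtxt]
    ring
  have he : B xt x' = -2 * (m2 : ℝ) ^ 2 := by
    simp only [hx', map_sub, map_smul, LinearMap.sub_apply, LinearMap.smul_apply, smul_eq_mul,
      hxtiso, hm2]
    ring
  have hex' : B x' xt = -2 * (m2 : ℝ) ^ 2 := by rw [hsym]; exact he
  have hene : B xt x' ≠ 0 := by
    rw [he]
    have : (m2 : ℝ) ^ 2 > 0 := by positivity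
    nlinarith
  -- linear independence of xt, x'
  have hLI : LinearIndependent ℝ ![xt, x'] := by
    rw [LinearIndependent.pair_iff]
    intro s t hst
    have h1 : B (s • xt + t • x') xt = 0 := by rw [hst]; simp
    have h2 : B (s • xt + t • x') x' = 0 := by rw [hst]; simp
    simp only [map_add, map_smul, LinearMap.add_apply, LinearMap.smul_apply, smul_eq_mul,
      hxtiso, hx'iso, he, hex'] at h1 h2
    have hc : (-2 * (m2 : ℝ) ^ 2) ≠ 0 :=
      mul_ne_zero (by norm_num) (pow_ne_zero 2 hm2ne)
    constructor
    · have hs : s * (-2 * (m2 : ℝ) ^ 2) = 0 := by linarith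
      exact (mul_eq_zero.mp hs).resolve_right hc
    · have ht : t * (-2 * (m2 : ℝ) ^ 2) = 0 := by linarith
      exact (mul_eq_zero.mp ht).resolve_right hc
  -- span equality
  have hspan : Submodule.span ℝ ({xt, x'} : Set (EuclideanSpace ℝ (Fin n)))
      = Submodule.span ℝ ({p, q} : Set (EuclideanSpace ℝ (Fin n))) := by
    have hle : Submodule.span ℝ ({xt, x'} : Set (EuclideanSpace ℝ (Fin n)))
        ≤ Submodule.span ℝ ({p, q} : Set (EuclideanSpace ℝ (Fin n))) := by
      rw [Submodule.span_le, Set.insert_subset_iff, Set.singleton_subset_iff]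
      exact ⟨hxtP, hx'P⟩
    have hr1 : Set.range ![xt, x'] = ({xt, x'} : Set (EuclideanSpace ℝ (Fin n))) := by
      rw [Matrix.range_cons, Matrix.range_cons, Matrix.range_empty, Set.union_empty,
        Set.singleton_union]
    have hr2 : Set.range ![p, q] = ({p, q} : Set (EuclideanSpace ℝ (Fin n))) := by
      rw [Matrix.range_cons, Matrix.range_cons, Matrix.range_empty, Set.union_empty,
        Set.singleton_union]
    have hf1 := finrank_span_eq_card hLI
    have hf2 := finrank_span_eq_card hpq
    rw [hr1] at hf1
    rw [hr2] at hf2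
    exact Submodule.eq_of_le_of_finrank_eq hle (by rw [hf1, hf2])
    -- fixed positive vector in P
  set y₀ : EuclideanSpace ℝ (Fin n) := xt - x' with hy₀
  have hy₀y₀ : B y₀ y₀ = 4 * (m2 : ℝ) ^ 2 := by
    simp only [hy₀, map_sub, LinearMap.sub_apply, hxtiso, hx'iso, he, hex']
    ring
  have hc₀ : (0 : ℝ) < 4 * (m2 : ℝ) ^ 2 := by positivity
  have hy₀pos : 0 < B y₀ y₀ := by rw [hy₀y₀]; exact hc₀
  set c₀ : ℝ := 4 * (m2 : ℝ) ^ 2 with hc₀def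
  -- the positive definite auxiliary form
  set Q : EuclideanSpace ℝ (Fin n) → ℝ :=
    fun u => -(B u u) + (2 / c₀) * (B u y₀) ^ 2 with hQ
  have hQhom : ∀ (c : ℝ) u, Q (c • u) = c ^ 2 * Q u := by
    intro c u
    simp only [hQ, map_smul, LinearMap.smul_apply, smul_eq_mul]
    ring
  have hQpos : ∀ u : EuclideanSpace ℝ (Fin n), u ≠ 0 → 0 < Q u := by
    intro u hu
    have hkey : c₀ ^ 2 * B u u ≤ c₀ * (B u y₀) ^ 2 ∨
        (B u y₀ ≠ 0 ∧ c₀ * B u u = (B u y₀) ^ 2) := by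
      by_cases huu : c₀ • u - (B u y₀) • y₀ = 0
      · right
        have hBy : B u y₀ ≠ 0 := by
          intro h0
          apply hu
          have : c₀ • u = (0:ℝ) • y₀ := by rw [← h0]; rw [sub_eq_zero] at huu; exact huu
          rw [zero_smul] at this
          have := smul_eq_zero.mp this
          rcases this with hc | hu'
          · exact absurd hc (ne_of_gt hc₀)
          · exact hu'
        refine ⟨hBy, ?_⟩
        have hzz : B u (c₀ • u) - B u ((B u y₀) • y₀) = 0 := by
          rw [← map_sub, huu, map_zero]
        simp only [map_smul, smul_eq_mul] at hzz
        linear_combination hzz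
      · left
        have hByu : B y₀ (c₀ • u - (B u y₀) • y₀) = 0 := by
          simp only [map_sub, map_smul, smul_eq_mul]
          rw [hsym y₀ u, hy₀y₀]
          ring
        have := hsig y₀ hy₀pos _ huu hByu
        have hexp : B (c₀ • u - (B u y₀) • y₀) (c₀ • u - (B u y₀) • y₀)
            = c₀ ^ 2 * B u u - c₀ * (B u y₀) ^ 2 := by
          simp only [map_sub, map_smul, LinearMap.sub_apply, LinearMap.smul_apply, smul_eq_mul,
            hy₀y₀]
          rw [hsym y₀ u]
          ring
        rw [hexp] at this
        linarith
    rcases hkey with hk | ⟨hBy, hk⟩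
    · rcases eq_or_ne (B u y₀) 0 with h0 | h0
      · have : B u u < 0 := hsig y₀ hy₀pos u hu (by rw [hsym]; exact h0)
        simp only [hQ, h0]
        nlinarith
      · have h1 : B u u ≤ (B u y₀) ^ 2 / c₀ := by
          rw [le_div_iff₀ hc₀]
          nlinarith [sq_nonneg c₀, hc₀]
        simp only [hQ]
        have h2 : 0 < (B u y₀) ^ 2 / c₀ := by positivity
        have h3 : (2 / c₀) * (B u y₀) ^ 2 = 2 * ((B u y₀) ^ 2 / c₀) := by ring
        rw [h3]
        linarith
    · simp only [hQ]
      have h1 : B u u = (B u y₀) ^ 2 / c₀ := by field_simp; linarith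
      have h2 : 0 < (B u y₀) ^ 2 / c₀ := by positivity
      rw [h1]
      have h3 : (2 / c₀) * (B u y₀) ^ 2 = 2 * ((B u y₀) ^ 2 / c₀) := by ring
      rw [h3]
      linarith
    -- continuity of Q
  have hBBc : Continuous fun u : EuclideanSpace ℝ (Fin n) => B u u := by
    let L : EuclideanSpace ℝ (Fin n) →ₗ[ℝ] (EuclideanSpace ℝ (Fin n) →L[ℝ] ℝ) :=
      { toFun := fun u => LinearMap.toContinuousLinearMap (B u)
        map_add' := fun u v => by ext w; simp
        map_smul' := fun r u => by ext w; simp }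
    have hL : Continuous L := L.continuous_of_finiteDimensional
    have hcl : Continuous fun u : EuclideanSpace ℝ (Fin n) => (L u) u :=
      hL.clm_apply continuous_id
    simpa [L] using hcl
  have hBy₀c : Continuous fun u : EuclideanSpace ℝ (Fin n) => B u y₀ := by
    have hcl := (B.flip y₀).continuous_of_finiteDimensional
    exact hcl
  have hQc : Continuous Q := by
    rw [hQ]
    exact (hBBc.neg).add (continuous_const.mul (hBy₀c.pow 2))
  -- minimum on the sphere
  have hne : h ≠ 0 := by intro h0; rw [h0] at hh; simp at hh
  have hnt : Nontrivial (EuclideanSpace ℝ (Fin n)) := nontrivial_of_ne h 0 hne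
  obtain ⟨u₀, hu₀s, hu₀min⟩ := (isCompact_sphere (0 : EuclideanSpace ℝ (Fin n)) 1).exists_isMinOn
    (NormedSpace.sphere_nonempty.mpr zero_le_one) hQc.continuousOn
  have hu₀n : ‖u₀‖ = 1 := mem_sphere_zero_iff_norm.mp hu₀s
  have hu₀ : u₀ ≠ 0 := by intro h0; rw [h0, norm_zero] at hu₀n; norm_num at hu₀n
  have hε : 0 < Q u₀ := hQpos u₀ hu₀
  have hcoer : ∀ u : EuclideanSpace ℝ (Fin n), Q u₀ * ‖u‖ ^ 2 ≤ Q u := by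
    intro u
    rcases eq_or_ne u 0 with rfl | hu
    · simp [hQ]
    · have hnu : (0:ℝ) < ‖u‖ := norm_pos_iff.mpr hu
      have h1 : (‖u‖⁻¹ • u) ∈ Metric.sphere (0 : EuclideanSpace ℝ (Fin n)) 1 := by
        rw [mem_sphere_zero_iff_norm, norm_smul, norm_inv, norm_norm, inv_mul_cancel₀ hnu.ne']
      have h2 : Q u₀ ≤ Q (‖u‖⁻¹ • u) := (isMinOn_iff.mp hu₀min) _ h1
      rw [hQhom] at h2
      have h4 : (‖u‖⁻¹) ^ 2 * Q u * ‖u‖ ^ 2 = Q u := by field_simp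
      have h5 := mul_le_mul_of_nonneg_right h2 (sq_nonneg ‖u‖)
      rw [h4] at h5
      exact h5
    -- constants
  set K : ℝ := (N : ℝ) * (m2 : ℝ) ^ 2 with hKdef
  have hm2sq : (0:ℝ) < (m2 : ℝ) ^ 2 := by positivity
  have hKpos : 0 < K := by
    rw [hKdef]
    have : (0:ℝ) < (N:ℝ) := by exact_mod_cast hN
    positivity
  set C : ℝ := (N : ℝ) + (2 / c₀) * (2 * K) ^ 2 with hCdef
  have hCpos : 0 < C := by
    rw [hCdef]
    have h1 : (0:ℝ) < (N:ℝ) := by exact_mod_cast hN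
    have h2 : (0:ℝ) ≤ (2 / c₀) * (2 * K) ^ 2 := by positivity
    linarith
  set R : ℝ := Real.sqrt (C / Q u₀) with hRdef
  have hfin : (Metric.closedBall (0 : EuclideanSpace ℝ (Fin n)) R ∩
      (Submodule.span ℤ (Set.range b) : Set (EuclideanSpace ℝ (Fin n)))).Finite := by
    haveI : DiscreteTopology
        ↥(((Submodule.span ℤ (Set.range b)).toAddSubgroup : Set (EuclideanSpace ℝ (Fin n)))) :=
      inferInstanceAs (DiscreteTopology (Submodule.span ℤ (Set.range b)))
    change ((_ : Set (EuclideanSpace ℝ (Fin n))) ∩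
      ((Submodule.span ℤ (Set.range b)).toAddSubgroup : Set (EuclideanSpace ℝ (Fin n)))).Finite
    exact Metric.finite_isBounded_inter_isClosed DiscreteTopology.isDiscrete Metric.isBounded_closedBall inferInstance
  refine Set.Finite.subset hfin ?_
  rw [hS]
  rintro v ⟨hvΛ, hvN, y, hyP, hvy, hyy, hyh⟩
  refine ⟨?_, hvΛ⟩
  -- decompose y over xt, x'
  rw [← hspan] at hyP
  obtain ⟨a, d, hab⟩ := Submodule.mem_span_pair.mp hyP
  obtain ⟨z1, hz1⟩ := pairInt B b hint hvΛ hxtΛ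
  obtain ⟨z2, hz2⟩ := pairInt B b hint hvΛ hx'Λ
  have hz1' : B xt v = (z1 : ℝ) := by rw [hsym]; exact hz1
  have hz2' : B x' v = (z2 : ℝ) := by rw [hsym]; exact hz2
  have hyy' : B y y = 2 * a * d * (-2 * (m2:ℝ)^2) := by
    rw [← hab]
    simp only [map_add, map_smul, LinearMap.add_apply, LinearMap.smul_apply, smul_eq_mul,
      hxtiso, hx'iso, he, hex']
    ring
  have had : a * d < 0 := by
    rw [hyy'] at hyy
    clear * - hyy hm2sq
    nlinarith
  have ha : a ≠ 0 := by rintro rfl; rw [zero_mul] at had; exact lt_irrefl 0 had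
  have hd : d ≠ 0 := by rintro rfl; rw [mul_zero] at had; exact lt_irrefl 0 had
  have hvyab : a * (z1:ℝ) + d * (z2:ℝ) = 0 := by
    have hv' : B v y = 0 := hvy
    rw [← hab] at hv'
    simp only [map_add, map_smul, smul_eq_mul, hz1, hz2] at hv'
    linarith
  have hz12 : 0 ≤ (z1:ℝ) * (z2:ℝ) := by
    have h1 : (a * d) * ((z1:ℝ) * (z2:ℝ)) = -(d * (z2:ℝ))^2 := by
      have h0 : a * (z1:ℝ) = -(d * (z2:ℝ)) := by linarith
      calc (a * d) * ((z1:ℝ) * (z2:ℝ)) = (a * (z1:ℝ)) * (d * (z2:ℝ)) := by ring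
        _ = -(d * (z2:ℝ)) * (d * (z2:ℝ)) := by rw [h0]
        _ = -(d * (z2:ℝ))^2 := by ring
    clear * - had h1
    nlinarith [sq_nonneg (d * (z2:ℝ)), had, h1]
  -- the key inequality
  have hBuy : B y ((-2 * (m2:ℝ)^2) • v - (z2:ℝ) • xt - (z1:ℝ) • x') = 0 := by
    rw [hsym, ← hab]
    simp only [map_sub, map_smul, map_add, LinearMap.sub_apply, LinearMap.smul_apply,
      LinearMap.add_apply, smul_eq_mul, hxtiso, hx'iso, he, hex', hz1, hz2, hz1', hz2']
    ring
  have hBuu : B ((-2 * (m2:ℝ)^2) • v - (z2:ℝ) • xt - (z1:ℝ) • x')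
      ((-2 * (m2:ℝ)^2) • v - (z2:ℝ) • xt - (z1:ℝ) • x') ≤ 0 := by
    rcases eq_or_ne ((-2 * (m2:ℝ)^2) • v - (z2:ℝ) • xt - (z1:ℝ) • x')
        (0 : EuclideanSpace ℝ (Fin n)) with h0 | h0
    · rw [h0]; simp
    · exact le_of_lt (hsig y hyy _ h0 hBuy)
  have hexp2 : B ((-2 * (m2:ℝ)^2) • v - (z2:ℝ) • xt - (z1:ℝ) • x')
      ((-2 * (m2:ℝ)^2) • v - (z2:ℝ) • xt - (z1:ℝ) • x')
      = (-2 * (m2:ℝ)^2)^2 * B v v - 2 * (-2 * (m2:ℝ)^2) * ((z1:ℝ) * (z2:ℝ)) := by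
    simp only [map_sub, map_smul, LinearMap.sub_apply, LinearMap.smul_apply, smul_eq_mul,
      hxtiso, hx'iso, he, hex', hz1, hz2, hz1', hz2']
    ring
  rw [hexp2] at hBuu
  have hzb : (z1:ℝ) * (z2:ℝ) < K := by
    rw [hKdef]
    clear * - hBuu hvN hm2sq
    nlinarith [hBuu, hvN, hm2sq, mul_pos hm2sq hm2sq]
  -- bounds on z1, z2
  have habs : |(z1:ℝ)| ≤ K ∧ |(z2:ℝ)| ≤ K := by
    rcases eq_or_ne z2 0 with h20 | h20
    · have hz10 : (z1:ℝ) = 0 := by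
        have hm : a * (z1:ℝ) = 0 := by
          rw [h20] at hvyab; push_cast at hvyab; linarith
        rcases mul_eq_zero.mp hm with hcc | hcc
        · exact absurd hcc ha
        · exact hcc
      rw [hz10, h20]
      push_cast
      rw [abs_zero]
      exact ⟨le_of_lt hKpos, le_of_lt hKpos⟩
    rcases eq_or_ne z1 0 with h10 | h10
    · have hz20 : (z2:ℝ) = 0 := by
        have hm : d * (z2:ℝ) = 0 := by
          rw [h10] at hvyab; push_cast at hvyab; linarith
        rcases mul_eq_zero.mp hm with hcc | hcc
        · exact absurd hcc hd
        · exact hcc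
      rw [hz20, h10]
      push_cast
      rw [abs_zero]
      exact ⟨le_of_lt hKpos, le_of_lt hKpos⟩
    · have h1l : (1:ℝ) ≤ |(z1:ℝ)| := by
        rw [← Int.cast_abs]
        exact_mod_cast Int.one_le_abs h10
      have h2l : (1:ℝ) ≤ |(z2:ℝ)| := by
        rw [← Int.cast_abs]
        exact_mod_cast Int.one_le_abs h20
      have hprod : |(z1:ℝ)| * |(z2:ℝ)| ≤ K := by
        rw [← abs_mul, abs_of_nonneg hz12]
        exact le_of_lt hzb
      constructor
      · clear * - h1l h2l hprod
        nlinarith [abs_nonneg (z1:ℝ), abs_nonneg (z2:ℝ)]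
      · clear * - h1l h2l hprod
        nlinarith [abs_nonneg (z1:ℝ), abs_nonneg (z2:ℝ)]
  -- bound on B v y₀
  have hvy₀b : |B v y₀| ≤ 2 * K := by
    have hexp3 : B v y₀ = (z1:ℝ) - (z2:ℝ) := by
      rw [hy₀, map_sub, hz1, hz2]
    rw [hexp3]
    calc |(z1:ℝ) - (z2:ℝ)| ≤ |(z1:ℝ)| + |(z2:ℝ)| := abs_sub _ _
      _ ≤ 2 * K := by linarith [habs.1, habs.2]
  -- conclude
  have hQv : Q v ≤ C := by
    rw [hQ, hCdef]
    have h1 : -(B v v) ≤ (N:ℝ) := by linarith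
    have h2 : (B v y₀)^2 ≤ (2*K)^2 := by
      have := abs_le.mp hvy₀b
      clear * - this
      nlinarith [this.1, this.2]
    have h3 : (0:ℝ) < 2 / c₀ := by positivity
    have h4 := mul_le_mul_of_nonneg_left h2 (le_of_lt h3)
    clear * - h1 h4
    linarith
  rw [Metric.mem_closedBall, dist_zero_right, hRdef]
  have hsq : ‖v‖ ^ 2 ≤ C / Q u₀ := by
    rw [le_div_iff₀ hε]
    calc ‖v‖ ^ 2 * Q u₀ = Q u₀ * ‖v‖ ^ 2 := by ring
      _ ≤ Q v := hcoer v
      _ ≤ C := hQv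
  exact Real.le_sqrt_of_sq_le hsq
end

section
/- Let Λ be a lattice of signature (1, n−1) with positive cone component C⁺, and let x₁, x₂ ∈ Λ ∩ C⁺ be linearly independent. Then for any positive integer N, the set {v ∈ Λ : (v,v) > −N and (v, s·x₁ + (1−s)·x₂) = 0 for some s ∈ [0,1]} is finite. -/
set_option maxHeartbeats 1600000 in
/-- For x₁, x₂ ∈ Λ ∩ C⁺ linearly independent, and N > 0, the set
{v ∈ Λ : (v,v) > −N and (v, s·x₁ + (1−s)·x₂) = 0 for some s ∈ [0,1]} is finite. -/
theorem stmt4 (n : ℕ)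
    (B : EuclideanSpace ℝ (Fin n) →ₗ[ℝ] EuclideanSpace ℝ (Fin n) →ₗ[ℝ] ℝ)
    (hsym : ∀ x y, B x y = B y x)
    (hnd : ∀ x, (∀ y, B x y = 0) → x = 0)
    (hsig : ∀ x, 0 < B x x → ∀ y, y ≠ 0 → B x y = 0 → B y y < 0)
    (b : Module.Basis (Fin n) ℝ (EuclideanSpace ℝ (Fin n)))
    (hint : ∀ i j, ∃ m : ℤ, B (b i) (b j) = (m : ℝ))
    (h : EuclideanSpace ℝ (Fin n))
    (hhL : h ∈ Submodule.span ℤ (Set.range b)) (hh : 0 < B h h)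
    (x₁ x₂ : EuclideanSpace ℝ (Fin n))
    (hx₁L : x₁ ∈ Submodule.span ℤ (Set.range b))
    (hx₂L : x₂ ∈ Submodule.span ℤ (Set.range b))
    (hx₁C : 0 < B x₁ x₁ ∧ 0 < B x₁ h)
    (hx₂C : 0 < B x₂ x₂ ∧ 0 < B x₂ h)
    (hind : LinearIndependent ℝ ![x₁, x₂])
    (N : ℕ) (hN : 0 < N) :
    {v : EuclideanSpace ℝ (Fin n) | v ∈ Submodule.span ℤ (Set.range b) ∧
      -(N : ℝ) < B v v ∧
      ∃ s : ℝ, s ∈ Set.Icc (0 : ℝ) 1 ∧ B v (s • x₁ + (1 - s) • x₂) = 0}.Finite := by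
  classical
  obtain ⟨hx₁₁, hx₁h⟩ := hx₁C
  obtain ⟨hx₂₂, hx₂h⟩ := hx₂C
  -- continuity of the bilinear form
  have contB : Continuous fun p : EuclideanSpace ℝ (Fin n) × EuclideanSpace ℝ (Fin n) =>
      B p.1 p.2 := by
    let g : EuclideanSpace ℝ (Fin n) →ₗ[ℝ] (EuclideanSpace ℝ (Fin n) →L[ℝ] ℝ) :=
      (LinearMap.toContinuousLinearMap :
        (EuclideanSpace ℝ (Fin n) →ₗ[ℝ] ℝ) ≃ₗ[ℝ] _).toLinearMap ∘ₗ B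
    have hg : Continuous g := g.continuous_of_finiteDimensional
    have : Continuous fun p : EuclideanSpace ℝ (Fin n) × EuclideanSpace ℝ (Fin n) =>
        (g p.1) p.2 := (hg.comp continuous_fst).clm_apply continuous_snd
    simpa [g] using this
  -- the orthogonal complement of h is negative semidefinite
  have hperp : ∀ z : EuclideanSpace ℝ (Fin n), B h z = 0 → B z z ≤ 0 := by
    intro z hz
    rcases eq_or_ne z 0 with rfl | hz0
    · simp
    · exact (hsig h hh z hz0 hz).le
  -- B x₁ x₂ > 0
  have hx12 : 0 < B x₁ x₂ := by
    have hα : 0 < B h x₁ := by rw [← hsym]; exact hx₁h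
    have hγ : 0 < B h x₂ := by rw [← hsym]; exact hx₂h
    have hz : B h ((B h x₂) • ((B h h) • x₁ - (B h x₁) • h)
        - (B h x₁) • ((B h h) • x₂ - (B h x₂) • h)) = 0 := by
      simp only [map_sub, map_smul, smul_eq_mul]
      ring
    have hkey := hperp _ hz
    have h1h : B x₁ h = B h x₁ := hsym x₁ h
    have h2h : B x₂ h = B h x₂ := hsym x₂ h
    have h21 : B x₂ x₁ = B x₁ x₂ := hsym x₂ x₁
    have hexp : B ((B h x₂) • ((B h h) • x₁ - (B h x₁) • h)
        - (B h x₁) • ((B h h) • x₂ - (B h x₂) • h))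
        ((B h x₂) • ((B h h) • x₁ - (B h x₁) • h)
        - (B h x₁) • ((B h h) • x₂ - (B h x₂) • h))
        = (B h x₂)^2 * (B h h)^2 * B x₁ x₁
          - 2 * (B h x₁) * (B h x₂) * (B h h)^2 * B x₁ x₂
          + (B h x₁)^2 * (B h h)^2 * B x₂ x₂ := by
      simp only [map_sub, map_smul, smul_eq_mul, LinearMap.sub_apply, LinearMap.smul_apply,
        h1h, h2h, h21]
      ring
    rw [hexp] at hkey
    nlinarith [mul_pos hα hγ, mul_pos hh hh, sq_nonneg (B h h),
      mul_pos (mul_pos (mul_pos hα hα) (mul_pos hh hh)) hx₂₂,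
      mul_pos (mul_pos (mul_pos hγ hγ) (mul_pos hh hh)) hx₁₁,
      mul_pos (mul_pos (mul_pos hα hγ) hh) hh]
  -- each segment point is positive
  have hxs : ∀ s : ℝ, s ∈ Set.Icc (0:ℝ) 1 →
      0 < B (s • x₁ + (1 - s) • x₂) (s • x₁ + (1 - s) • x₂) := by
    intro s hs
    obtain ⟨hs0, hs1⟩ := hs
    have h21 : B x₂ x₁ = B x₁ x₂ := hsym x₂ x₁
    have expand : B (s • x₁ + (1 - s) • x₂) (s • x₁ + (1 - s) • x₂)
        = s ^ 2 * B x₁ x₁ + 2 * s * (1 - s) * B x₁ x₂ + (1 - s) ^ 2 * B x₂ x₂ := by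
      simp only [map_add, map_smul, smul_eq_mul, LinearMap.add_apply, LinearMap.smul_apply, h21]
      ring
    rw [expand]
    rcases eq_or_lt_of_le hs0 with rfl | hs0'
    · simpa using hx₂₂
    · have t1 : 0 < s ^ 2 * B x₁ x₁ := by positivity
      have t2 : 0 ≤ 2 * s * (1 - s) * B x₁ x₂ := by
        have : (0:ℝ) ≤ 1 - s := by linarith
        positivity
      have t3 : 0 ≤ (1 - s) ^ 2 * B x₂ x₂ := by positivity
      linarith
  -- the compact set of normalized orthogonal vectors
  set S : Set (ℝ × EuclideanSpace ℝ (Fin n)) :=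
    {p | p.1 ∈ Set.Icc (0:ℝ) 1 ∧ ‖p.2‖ = 1 ∧
      B p.2 (p.1 • x₁ + (1 - p.1) • x₂) = 0} with hS_def
  have contb2 : Continuous fun p : ℝ × EuclideanSpace ℝ (Fin n) =>
      B p.2 (p.1 • x₁ + (1 - p.1) • x₂) := by
    have hc : Continuous fun p : ℝ × EuclideanSpace ℝ (Fin n) =>
        (p.2, p.1 • x₁ + (1 - p.1) • x₂) := by fun_prop
    exact contB.comp hc
  have hSclosed : IsClosed S := by
    have h1 : IsClosed {p : ℝ × EuclideanSpace ℝ (Fin n) | p.1 ∈ Set.Icc (0:ℝ) 1} :=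
      isClosed_Icc.preimage continuous_fst
    have h2 : IsClosed {p : ℝ × EuclideanSpace ℝ (Fin n) | ‖p.2‖ = 1} :=
      isClosed_eq (continuous_norm.comp continuous_snd) continuous_const
    have h3 : IsClosed {p : ℝ × EuclideanSpace ℝ (Fin n) |
        B p.2 (p.1 • x₁ + (1 - p.1) • x₂) = 0} := isClosed_eq contb2 continuous_const
    rw [hS_def, Set.setOf_and, Set.setOf_and]
    exact h1.inter (h2.inter h3)
  have hScompact : IsCompact S := by
    refine IsCompact.of_isClosed_subset
      ((isCompact_Icc (a := (0:ℝ)) (b := 1)).prod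
        (isCompact_sphere (0 : EuclideanSpace ℝ (Fin n)) 1)) hSclosed ?_
    rintro ⟨s, v⟩ ⟨hs, hv, -⟩
    exact ⟨hs, by simpa [mem_sphere_iff_norm] using hv⟩
  -- every point of S has B v v < 0
  have hSneg : ∀ p ∈ S, B p.2 p.2 < 0 := by
    rintro ⟨s, v⟩ ⟨hs, hv, hbv⟩
    have hv0 : v ≠ 0 := by
      intro hv0; rw [hv0] at hv; simp at hv
    exact hsig _ (hxs s hs) v hv0 (by rw [hsym]; exact hbv)
  by_cases hSne : S.Nonempty
  · obtain ⟨p₀, hp₀, hmin⟩ := hScompact.exists_isMinOn hSne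
      (Continuous.continuousOn (f := fun p : ℝ × EuclideanSpace ℝ (Fin n) => -B p.2 p.2) (by
        have hc : Continuous fun p : ℝ × EuclideanSpace ℝ (Fin n) => (p.2, p.2) := by fun_prop
        exact (contB.comp hc).neg))
    set ε : ℝ := -B p₀.2 p₀.2 with hε_def
    have hε : 0 < ε := by
      rw [hε_def, neg_pos]
      exact hSneg p₀ hp₀
    set R : ℝ := Real.sqrt ((N : ℝ) / ε) with hR_def
    have hsub : {v : EuclideanSpace ℝ (Fin n) | v ∈ Submodule.span ℤ (Set.range b) ∧
        -(N : ℝ) < B v v ∧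
        ∃ s : ℝ, s ∈ Set.Icc (0 : ℝ) 1 ∧ B v (s • x₁ + (1 - s) • x₂) = 0} ⊆
        Metric.closedBall (0 : EuclideanSpace ℝ (Fin n)) R ∩
          (Submodule.span ℤ (Set.range b) : Set (EuclideanSpace ℝ (Fin n))) := by
      rintro v ⟨hvL, hvN, s, hs, hvs⟩
      refine ⟨?_, hvL⟩
      rw [Metric.mem_closedBall, dist_zero_right]
      rcases eq_or_ne v 0 with rfl | hv0
      · rw [norm_zero, hR_def]
        positivity
      · have hnv : (0:ℝ) < ‖v‖ := norm_pos_iff.mpr hv0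
        have hun : ‖(‖v‖⁻¹ • v : EuclideanSpace ℝ (Fin n))‖ = 1 := by
          rw [norm_smul, norm_inv, norm_norm, inv_mul_cancel₀ hnv.ne']
        have huS : (s, ‖v‖⁻¹ • v) ∈ S := by
          refine ⟨hs, hun, ?_⟩
          simp only [map_smul, LinearMap.smul_apply, smul_eq_mul, hvs, mul_zero]
        have hmin' : ε ≤ -B (‖v‖⁻¹ • v) (‖v‖⁻¹ • v) := isMinOn_iff.mp hmin _ huS
        have huu : B (‖v‖⁻¹ • v) (‖v‖⁻¹ • v) = ‖v‖⁻¹ * (‖v‖⁻¹ * B v v) := by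
          simp [map_smul]
        rw [huu] at hmin'
        have hinv : ‖v‖⁻¹ * ‖v‖ = 1 := inv_mul_cancel₀ hnv.ne'
        have hbound : ε * ‖v‖ ^ 2 ≤ -B v v := by
          have h3 := mul_le_mul_of_nonneg_right hmin' (sq_nonneg ‖v‖)
          have hid : -(‖v‖⁻¹ * (‖v‖⁻¹ * B v v)) * ‖v‖ ^ 2 = -B v v := by
            linear_combination (-(B v v) * (1 + ‖v‖⁻¹ * ‖v‖)) * hinv
          rw [hid] at h3
          exact h3
        have hlt : ‖v‖ ^ 2 < (N : ℝ) / ε := by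
          rw [lt_div_iff₀ hε]
          nlinarith
        calc ‖v‖ = Real.sqrt (‖v‖ ^ 2) := (Real.sqrt_sq hnv.le).symm
          _ ≤ R := Real.sqrt_le_sqrt hlt.le
    refine Set.Finite.subset ?_ hsub
    have : DiscreteTopology
        (Submodule.span ℤ (Set.range b) : Set (EuclideanSpace ℝ (Fin n))) :=
      inferInstanceAs (DiscreteTopology (Submodule.span ℤ (Set.range ⇑b)))
    exact Metric.finite_isBounded_inter_isClosed DiscreteTopology.isDiscrete Metric.isBounded_closedBall
      (AddSubgroup.isClosed_of_discrete
        (H := (Submodule.span ℤ (Set.range ⇑b)).toAddSubgroup))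
  · -- S empty: only v = 0 can be in the set
    apply Set.Finite.subset (Set.finite_singleton (0 : EuclideanSpace ℝ (Fin n)))
    rintro v ⟨hvL, hvN, s, hs, hvs⟩
    by_contra hv0
    apply hSne
    have hnv : (0:ℝ) < ‖v‖ := norm_pos_iff.mpr hv0
    refine ⟨(s, ‖v‖⁻¹ • v), hs, ?_, ?_⟩
    · rw [norm_smul, norm_inv, norm_norm, inv_mul_cancel₀ hnv.ne']
    · simp only [map_smul, LinearMap.smul_apply, smul_eq_mul, hvs, mul_zero]
end
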